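/- Let G ⊊ ℝⁿ be a domain (nonempty, open, connected, proper subset). Then for every x ∈ G and every r ∈ (0,1), the open Euclidean ball B(x, (2r/(1+r))·d_G(x)) is contained in the triangular-ratio metric ball B_s(x,r), and B_s(x,r) is contained in the open Euclidean ball B(x, (2r/(1−r))·d_G(x)). -/
import Mathlib


/-- The triangular ratio metric `s_G(x,y) = sup_{z ∈ ∂G} |x−y|/(|z−x|+|z−y|)`. -/
noncomputable def sMetric {n : ℕ} (G : Set (EuclideanSpace ℝ (Fin n)))
    (x y : EuclideanSpace ℝ (Fin n)) : ℝ :=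
  ⨆ z ∈ frontier G, dist x y / (dist z x + dist z y)

/-- The metric ball `B_s(x,r) = {y ∈ G : s_G(x,y) < r}`. -/
def sBall {n : ℕ} (G : Set (EuclideanSpace ℝ (Fin n))) (x : EuclideanSpace ℝ (Fin n))
    (r : ℝ) : Set (EuclideanSpace ℝ (Fin n)) :=
  {y ∈ G | sMetric G x y < r}

/-- A segment from a point of `G` to a point outside `G` meets the frontier. -/
lemma segment_inter_frontier {n : ℕ} {G : Set (EuclideanSpace ℝ (Fin n))}
    {x y : EuclideanSpace ℝ (Fin n)} (hGo : IsOpen G) (hx : x ∈ G) (hy : y ∉ G) :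
    ∃ z ∈ segment ℝ x y, z ∈ frontier G := by
  by_contra h
  push_neg at h
  have hseg : IsPreconnected (segment ℝ x y) := (convex_segment x y).isPreconnected
  have hy' : y ∉ closure G := by
    intro hyc
    exact h y (right_mem_segment ℝ x y) ⟨hyc, by rwa [hGo.interior_eq]⟩
  obtain ⟨w, -, hwG, hwc⟩ :=
    hseg G (closure G)ᶜ hGo isClosed_closure.isOpen_compl
      (fun z hz => by
        rcases Classical.em (z ∈ G) with hzG | hzG
        · exact Or.inl hzG
        · refine Or.inr fun hzc => h z hz ⟨hzc, by rwa [hGo.interior_eq]⟩)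
      ⟨x, left_mem_segment ℝ x y, hx⟩ ⟨y, right_mem_segment ℝ x y, hy'⟩
  exact hwc (subset_closure hwG)

theorem euclideanBall_subset_sBall_subset_euclideanBall (n : ℕ)
    (G : Set (EuclideanSpace ℝ (Fin n))) (hGo : IsOpen G) (hGc : IsConnected G)
    (hGp : G ≠ Set.univ) (x : EuclideanSpace ℝ (Fin n)) (hx : x ∈ G)
    (r : ℝ) (hr : r ∈ Set.Ioo (0:ℝ) 1) :
    Metric.ball x (2 * r / (1 + r) * Metric.infDist x (frontier G)) ⊆ sBall G x r ∧
    sBall G x r ⊆ Metric.ball x (2 * r / (1 - r) * Metric.infDist x (frontier G)) := by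
  obtain ⟨hr0, hr1⟩ := hr
  have hfr : (frontier G).Nonempty := nonempty_frontier_iff.mpr ⟨⟨x, hx⟩, hGp⟩
  set d := Metric.infDist x (frontier G) with hd_def
  have hxfr : x ∉ frontier G := fun hxf => hxf.2 (by rwa [hGo.interior_eq])
  have hd : 0 < d :=
    (isClosed_frontier.notMem_iff_infDist_pos hfr).mp hxfr
  -- the euclidean ball of radius d is inside G
  have hball : Metric.ball x d ⊆ G := by
    intro y hy
    by_contra hyG
    obtain ⟨z, hzseg, hzfr⟩ := segment_inter_frontier hGo hx hyG
    have h1 : d ≤ dist x z := Metric.infDist_le_dist_of_mem hzfr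
    have h2 : dist x z ≤ dist x y := by
      have := dist_add_dist_of_mem_segment hzseg
      nlinarith [dist_nonneg (x := z) (y := y)]
    rw [Metric.mem_ball, dist_comm] at hy
    linarith
  constructor
  · intro y hy
    rw [Metric.mem_ball, dist_comm] at hy
    set t := dist x y with ht_def
    have ht0 : 0 ≤ t := dist_nonneg
    have hfrac : 2 * r / (1 + r) < 1 := by
      rw [div_lt_one (by linarith)]; linarith
    have htd : t < d := lt_of_lt_of_le hy (by nlinarith)
    have hyG : y ∈ G := hball (by rwa [Metric.mem_ball, dist_comm])
    have h2dt : 0 < 2 * d - t := by linarith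
    have hcr : t / (2 * d - t) < r := by
      rw [div_lt_iff₀ h2dt]
      rw [div_mul_eq_mul_div, lt_div_iff₀ (by linarith : (0:ℝ) < 1 + r)] at hy
      nlinarith
    refine ⟨hyG, lt_of_le_of_lt ?_ hcr⟩
    have hc0 : 0 ≤ t / (2 * d - t) := div_nonneg ht0 h2dt.le
    refine Real.iSup_le (fun z => Real.iSup_le (fun hz => ?_) hc0) hc0
    have hzx : d ≤ dist z x := by
      rw [dist_comm]; exact Metric.infDist_le_dist_of_mem hz
    have hzy : d - t ≤ dist z y := by
      have := dist_triangle z y x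
      have := dist_triangle x y z
      have h3 : dist z x ≤ dist z y + dist y x := dist_triangle z y x
      rw [dist_comm y x] at h3
      linarith
    have hden : 2 * d - t ≤ dist z x + dist z y := by linarith
    exact div_le_div_of_nonneg_left ht0 h2dt hden
  · rintro y ⟨hyG, hs⟩
    rw [Metric.mem_ball, dist_comm]
    set t := dist x y with ht_def
    have ht0 : 0 ≤ t := dist_nonneg
    have hRpos : 0 < 2 * r / (1 - r) * d := by
      apply mul_pos _ hd
      apply div_pos (by linarith) (by linarith)
    rcases eq_or_lt_of_le ht0 with ht | ht
    · rw [← ht]; exact hRpos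
    obtain ⟨z, hzfr, hzd⟩ :=
      isClosed_frontier.exists_infDist_eq_dist hfr x
    rw [← hd_def] at hzd
    have hq : t / (dist z x + dist z y) ≤ sMetric G x y := by
      have hbdd : BddAbove (Set.range fun z =>
          ⨆ _ : z ∈ frontier G, t / (dist z x + dist z y)) := by
        refine ⟨1, Set.forall_mem_range.mpr fun w => Real.iSup_le (fun hw => ?_) zero_le_one⟩
        have h3 : t ≤ dist w x + dist w y := by
          calc t ≤ dist x w + dist w y := dist_triangle x w y
          _ = dist w x + dist w y := by rw [dist_comm x w]
        rw [div_le_one (lt_of_lt_of_le ht h3)]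
        exact h3
      exact le_ciSup_of_le hbdd z (by rw [ciSup_pos hzfr])
    have hqr : t / (dist z x + dist z y) < r := lt_of_le_of_lt hq hs
    have hzx : dist z x = d := by rw [dist_comm]; exact hzd.symm
    have hzy : dist z y ≤ d + t := by
      calc dist z y ≤ dist z x + dist x y := dist_triangle z x y
      _ = d + t := by rw [hzx]
    have hden : 0 < dist z x + dist z y := by
      rw [hzx]; have := dist_nonneg (x := z) (y := y); linarith
    have ht' : t < r * (dist z x + dist z y) := (div_lt_iff₀ hden).mp hqr
    have : t < r * (2 * d + t) := by
      apply lt_of_lt_of_le ht'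
      apply mul_le_mul_of_nonneg_left _ hr0.le
      rw [hzx]; linarith
    rw [div_mul_eq_mul_div, lt_div_iff₀ (by linarith : (0:ℝ) < 1 - r)]
    nlinarith
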